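/- For every integer g ≥ 2 there exists ε > 0 such that for all 0 < l < ε, the quantity r(l) defined by sinh²(r(l)) = (1/2)(√(1-2k)/k - 1), k = cosh(√(4πl/√3)) - 1, satisfies r(l) > arccosh(2g - 1). -/

import Mathlib

open Real Filter Set

/-- The inverse of `cosh` on `[0, ∞)`. -/
noncomputable def arccosh (x : ℝ) : ℝ := Real.log (x + Real.sqrt (x ^ 2 - 1))

/-- Meyerhoff's tube-radius lower bound as a function of the geodesic length `l`. -/
noncomputable def meyerhoffRadius (l : ℝ) : ℝ :=
  Real.arsinh (Real.sqrt ((1 / 2) *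
    (Real.sqrt (1 - 2 * (Real.cosh (Real.sqrt (4 * Real.pi * l / Real.sqrt 3)) - 1)) /
        (Real.cosh (Real.sqrt (4 * Real.pi * l / Real.sqrt 3)) - 1) - 1)))

/-- For every integer `g ≥ 2` there exists `ε > 0` such that for all `0 < l < ε`,
Meyerhoff's tube radius `r(l)` exceeds `arccosh (2g - 1)`. -/
theorem exists_eps_meyerhoff_radius_gt (g : ℤ) (hg : 2 ≤ g) :
    ∃ ε : ℝ, 0 < ε ∧ ∀ l : ℝ, 0 < l → l < ε →
      meyerhoffRadius l > arccosh (2 * (g : ℝ) - 1) := by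
  have hg' : (2 : ℝ) ≤ (g : ℝ) := by exact_mod_cast hg
  set y : ℝ := 2 * (g : ℝ) - 1 with hy_def
  have hy : (3 : ℝ) ≤ y := by rw [hy_def]; linarith
  clear_value y
  set M : ℝ := 8 * y ^ 2 + 1 with hM_def
  have hM : (1 : ℝ) < M := by nlinarith
  clear_value M
  have hMpos : (0 : ℝ) < M := by linarith
  set δ : ℝ := min (1 / 4) (1 / (2 * M)) with hd_def
  have hδpos : 0 < δ := by rw [hd_def]; apply lt_min <;> positivity
  have hδ1 : δ ≤ 1 / 4 := min_le_left _ _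
  have hδ2 : δ ≤ 1 / (2 * M) := min_le_right _ _
  clear_value δ
  have hcont : ContinuousAt
      (fun l : ℝ => Real.cosh (Real.sqrt (4 * Real.pi * l / Real.sqrt 3)) - 1) 0 := by
    fun_prop
  have h0 : Real.cosh (Real.sqrt (4 * Real.pi * 0 / Real.sqrt 3)) - 1 = 0 := by simp
  have htend : Tendsto
      (fun l : ℝ => Real.cosh (Real.sqrt (4 * Real.pi * l / Real.sqrt 3)) - 1)
      (nhds 0) (nhds 0) := by
    have := hcont.tendsto
    rwa [h0] at this
  have hev : ∀ᶠ l : ℝ in nhds 0,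
      Real.cosh (Real.sqrt (4 * Real.pi * l / Real.sqrt 3)) - 1 < δ :=
    htend.eventually_lt_const hδpos
  obtain ⟨ε, hεpos, hball⟩ := Metric.eventually_nhds_iff.mp hev
  refine ⟨ε, hεpos, fun l hl hlε => ?_⟩
  have hdist : dist l 0 < ε := by simpa [abs_of_pos hl] using hlε
  have hkδ : Real.cosh (Real.sqrt (4 * Real.pi * l / Real.sqrt 3)) - 1 < δ := hball hdist
  have hs_pos : 0 < Real.sqrt (4 * Real.pi * l / Real.sqrt 3) := by
    apply Real.sqrt_pos.mpr
    have h3 : 0 < Real.sqrt 3 := Real.sqrt_pos.mpr (by norm_num)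
    positivity
  have hkpos : 0 < Real.cosh (Real.sqrt (4 * Real.pi * l / Real.sqrt 3)) - 1 := by
    have : 1 < Real.cosh (Real.sqrt (4 * Real.pi * l / Real.sqrt 3)) :=
      Real.one_lt_cosh.mpr hs_pos.ne'
    linarith
  -- abstract k
  obtain ⟨k, hk_def⟩ : ∃ k : ℝ, k = Real.cosh (Real.sqrt (4 * Real.pi * l / Real.sqrt 3)) - 1 :=
    ⟨_, rfl⟩
  rw [← hk_def] at hkδ hkpos
  have hk4 : k < 1 / 4 := lt_of_lt_of_le hkδ hδ1
  have hkM : k < 1 / (2 * M) := lt_of_lt_of_le hkδ hδ2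
  have hsq : (1 : ℝ) / 2 ≤ Real.sqrt (1 - 2 * k) := by
    rw [show (1:ℝ)/2 = Real.sqrt ((1/2)^2) by rw [Real.sqrt_sq]; norm_num]
    apply Real.sqrt_le_sqrt; nlinarith
  have hMk : M * k < 1 / 2 := by
    have h1 : M * k < M * (1 / (2 * M)) := by
      exact mul_lt_mul_of_pos_left hkM hMpos
    have h2 : M * (1 / (2 * M)) = 1 / 2 := by field_simp
    linarith
  have hdiv : M < Real.sqrt (1 - 2 * k) / k := by
    rw [lt_div_iff₀ hkpos]
    nlinarith
  obtain ⟨X, hX_def⟩ : ∃ X : ℝ, X = (1 / 2) * (Real.sqrt (1 - 2 * k) / k - 1) := ⟨_, rfl⟩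
  have hX : 4 * y ^ 2 < X := by
    have h1 : 8 * y ^ 2 + 1 < Real.sqrt (1 - 2 * k) / k := hM_def ▸ hdiv
    rw [hX_def]; linarith
  have hypos : (0 : ℝ) < y := by linarith
  have hXpos : (0 : ℝ) < X := by nlinarith
  have hsqrtX : 2 * y < Real.sqrt X := by
    rw [show 2 * y = Real.sqrt ((2 * y) ^ 2) by rw [Real.sqrt_sq (by positivity)]]
    apply Real.sqrt_lt_sqrt (by positivity)
    have h2 : (2 * y) ^ 2 = 4 * y ^ 2 := by ring
    linarith
  show arccosh y < meyerhoffRadius l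
  unfold arccosh meyerhoffRadius Real.arsinh
  rw [← hk_def, ← hX_def]
  apply Real.log_lt_log (by positivity)
  have h1 : Real.sqrt (y ^ 2 - 1) < y := by
    nlinarith [Real.sq_sqrt (show (0:ℝ) ≤ y ^ 2 - 1 by nlinarith),
      Real.sqrt_nonneg (y ^ 2 - 1)]
  have h2 : (0 : ℝ) ≤ Real.sqrt (1 + Real.sqrt X ^ 2) := Real.sqrt_nonneg _
  linarith
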